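/- arXiv:1903.11035 — 9 statements merged into one kernel-verified Lean document; each statement's English description precedes it below -/
import Mathlib

section
/- In the polynomial ring $R = K[X,Y]$ over a field $K$, let $J = (X^3, XY, Y^4)$ and $I = (XY, X^3 + Y^4)$. Then $IJ = J^2$ but $I^2 \neq J^2$. -/
open MvPolynomial

/-- monomial exponent vector in two variables -/
noncomputable def stmt2m (i j : ℕ) : Fin 2 →₀ ℕ :=
  Finsupp.single 0 i + Finsupp.single 1 j

lemma stmt2m_le (i j k l : ℕ) : stmt2m i j ≤ stmt2m k l ↔ i ≤ k ∧ j ≤ l := by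
  simp [stmt2m, Finsupp.le_def, Fin.forall_fin_two, Finsupp.single_apply]

lemma stmt2m_eq (i j k l : ℕ) : stmt2m i j = stmt2m k l ↔ i = k ∧ j = l := by
  constructor
  · intro h
    rw [DFunLike.ext_iff, Fin.forall_fin_two] at h
    simpa [stmt2m, Finsupp.single_apply] using h
  · rintro ⟨rfl, rfl⟩; rfl

lemma stmt2m_spec {K : Type*} [Field K] (i j : ℕ) :
    (monomial (stmt2m i j) (1 : K)) = X 0 ^ i * X 1 ^ j := by
  rw [X_pow_eq_monomial, X_pow_eq_monomial, monomial_mul, one_mul, stmt2m]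

/-- The key non-membership fact. -/
lemma stmt2_key {K : Type*} [Field K] :
    (X 0 ^ 4 * X 1 : MvPolynomial (Fin 2) K) ∉
      Ideal.span {(X 0 * X 1) ^ 2, (X 0 * X 1) * (X 0 ^ 3 + X 1 ^ 4),
        (X 0 ^ 3 + X 1 ^ 4) ^ 2} := by
  intro h
  rw [Ideal.mem_span_insert] at h
  obtain ⟨a, z, hz, hzeq⟩ := h
  rw [Ideal.mem_span_insert] at hz
  obtain ⟨b, w, hw, hweq⟩ := hz
  rw [Ideal.mem_span_singleton'] at hw
  obtain ⟨c, hc⟩ := hw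
  subst hweq hc
  have e0 : (X 0 ^ 4 * X 1 : MvPolynomial (Fin 2) K) = monomial (stmt2m 4 1) 1 := by
    rw [stmt2m_spec]; ring
  have e1 : ((X 0 * X 1 : MvPolynomial (Fin 2) K)) ^ 2 = monomial (stmt2m 2 2) 1 := by
    rw [stmt2m_spec]; ring
  have e2 : ((X 0 * X 1 : MvPolynomial (Fin 2) K)) * (X 0 ^ 3 + X 1 ^ 4) =
      monomial (stmt2m 4 1) 1 + monomial (stmt2m 1 5) 1 := by
    rw [stmt2m_spec, stmt2m_spec]; ring
  have e3 : ((X 0 ^ 3 + X 1 ^ 4 : MvPolynomial (Fin 2) K)) ^ 2 =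
      monomial (stmt2m 6 0) 1 + (monomial (stmt2m 3 4) 1 + monomial (stmt2m 3 4) 1 +
        monomial (stmt2m 0 8) 1) := by
    rw [stmt2m_spec, stmt2m_spec, stmt2m_spec]; ring
  rw [e0, e1, e2, e3] at hzeq
  have h1 := congrArg (coeff (stmt2m 4 1)) hzeq
  have h2 := congrArg (coeff (stmt2m 1 5)) hzeq
  simp only [coeff_add, mul_add, coeff_mul_monomial', coeff_monomial, stmt2m_le, stmt2m_eq] at h1 h2
  norm_num at h1 h2
  exact one_ne_zero (h1.trans h2.symm)

theorem stmt_2 {K : Type*} [Field K]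
    (J : Ideal (MvPolynomial (Fin 2) K)) (I : Ideal (MvPolynomial (Fin 2) K))
    (hJ : J = Ideal.span {X 0 ^ 3, X 0 * X 1, X 1 ^ 4})
    (hI : I = Ideal.span {X 0 * X 1, X 0 ^ 3 + X 1 ^ 4}) :
    I * J = J ^ 2 ∧ I ^ 2 ≠ J ^ 2 := by
  subst hI hJ
  set R := MvPolynomial (Fin 2) K
  have hJ1 : (X 0 ^ 3 : R) ∈ Ideal.span {X 0 ^ 3, X 0 * X 1, X 1 ^ 4} :=
    Ideal.subset_span (by simp)
  have hJ2 : (X 0 * X 1 : R) ∈ Ideal.span {X 0 ^ 3, X 0 * X 1, X 1 ^ 4} :=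
    Ideal.subset_span (by simp)
  have hJ3 : (X 1 ^ 4 : R) ∈ Ideal.span {X 0 ^ 3, X 0 * X 1, X 1 ^ 4} :=
    Ideal.subset_span (by simp)
  have hI1 : (X 0 * X 1 : R) ∈ Ideal.span {X 0 * X 1, X 0 ^ 3 + X 1 ^ 4} :=
    Ideal.subset_span (by simp)
  have hI2 : (X 0 ^ 3 + X 1 ^ 4 : R) ∈ Ideal.span {X 0 * X 1, X 0 ^ 3 + X 1 ^ 4} :=
    Ideal.subset_span (by simp)
  have hJm : (X 0 ^ 2 * X 1 ^ 3 : R) ∈ Ideal.span {X 0 ^ 3, X 0 * X 1, X 1 ^ 4} := by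
    have : (X 0 ^ 2 * X 1 ^ 3 : R) = (X 0 * X 1 ^ 2) * (X 0 * X 1) := by ring
    rw [this]
    exact Ideal.mul_mem_left _ _ hJ2
  have hILEJ : Ideal.span {(X 0 * X 1 : R), X 0 ^ 3 + X 1 ^ 4} ≤
      Ideal.span {X 0 ^ 3, X 0 * X 1, X 1 ^ 4} := by
    rw [Ideal.span_le]
    rintro x hx
    simp only [Set.mem_insert_iff, Set.mem_singleton_iff] at hx
    rcases hx with rfl | rfl
    · exact hJ2
    · exact add_mem hJ1 hJ3
  -- key product memberships
  have hx3y4 : (X 0 ^ 3 * X 1 ^ 4 : R) ∈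
      Ideal.span {(X 0 * X 1 : R), X 0 ^ 3 + X 1 ^ 4} * Ideal.span {X 0 ^ 3, X 0 * X 1, X 1 ^ 4} := by
    have h2 := Ideal.mul_mem_mul hI1 hJm
    have : (X 0 ^ 3 * X 1 ^ 4 : R) = (X 0 * X 1) * (X 0 ^ 2 * X 1 ^ 3) := by ring
    rw [this]; exact h2
  have hx6 : (X 0 ^ 3 * X 0 ^ 3 : R) ∈
      Ideal.span {(X 0 * X 1 : R), X 0 ^ 3 + X 1 ^ 4} * Ideal.span {X 0 ^ 3, X 0 * X 1, X 1 ^ 4} := by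
    have h1 := Ideal.mul_mem_mul hI2 hJ1
    have : (X 0 ^ 3 * X 0 ^ 3 : R) = (X 0 ^ 3 + X 1 ^ 4) * X 0 ^ 3 - X 0 ^ 3 * X 1 ^ 4 := by ring
    rw [this]; exact sub_mem h1 hx3y4
  have hy8 : (X 1 ^ 4 * X 1 ^ 4 : R) ∈
      Ideal.span {(X 0 * X 1 : R), X 0 ^ 3 + X 1 ^ 4} * Ideal.span {X 0 ^ 3, X 0 * X 1, X 1 ^ 4} := by
    have h1 := Ideal.mul_mem_mul hI2 hJ3
    have : (X 1 ^ 4 * X 1 ^ 4 : R) = (X 0 ^ 3 + X 1 ^ 4) * X 1 ^ 4 - X 0 ^ 3 * X 1 ^ 4 := by ring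
    rw [this]; exact sub_mem h1 hx3y4
  constructor
  · apply le_antisymm
    · rw [pow_two]
      exact Ideal.mul_mono hILEJ le_rfl
    · rw [pow_two, Ideal.span_mul_span']
      rw [Ideal.span_le]
      rintro x hx
      rw [Set.mem_mul] at hx
      obtain ⟨p, hp, q, hq, rfl⟩ := hx
      simp only [Set.mem_insert_iff, Set.mem_singleton_iff] at hp hq
      rcases hp with rfl | rfl | rfl <;> rcases hq with rfl | rfl | rfl
      · exact hx6
      · -- x³ * xy
        have : (X 0 ^ 3 * (X 0 * X 1) : R) = (X 0 * X 1) * X 0 ^ 3 := by ring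
        rw [this]; exact Ideal.mul_mem_mul hI1 hJ1
      · -- x³ * y⁴
        have : (X 0 ^ 3 * X 1 ^ 4 : R) = X 0 ^ 3 * X 1 ^ 4 := rfl
        exact hx3y4
      · exact Ideal.mul_mem_mul hI1 hJ1
      · exact Ideal.mul_mem_mul hI1 hJ2
      · exact Ideal.mul_mem_mul hI1 hJ3
      · have : (X 1 ^ 4 * X 0 ^ 3 : R) = X 0 ^ 3 * X 1 ^ 4 := by ring
        rw [this]; exact hx3y4
      · have : (X 1 ^ 4 * (X 0 * X 1) : R) = (X 0 * X 1) * X 1 ^ 4 := by ring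
        rw [this]; exact Ideal.mul_mem_mul hI1 hJ3
      · exact hy8
  · intro hEq
    have hmem : (X 0 ^ 4 * X 1 : R) ∈ (Ideal.span {(X 0 * X 1 : R), X 0 ^ 3 + X 1 ^ 4}) ^ 2 := by
      rw [hEq, pow_two]
      have : (X 0 ^ 4 * X 1 : R) = X 0 ^ 3 * (X 0 * X 1) := by ring
      rw [this]
      exact Ideal.mul_mem_mul hJ1 hJ2
    have hle : (Ideal.span {(X 0 * X 1 : R), X 0 ^ 3 + X 1 ^ 4}) ^ 2 ≤
        Ideal.span {(X 0 * X 1) ^ 2, (X 0 * X 1) * (X 0 ^ 3 + X 1 ^ 4), (X 0 ^ 3 + X 1 ^ 4) ^ 2} := by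
      rw [pow_two, Ideal.span_mul_span', Ideal.span_le]
      rintro x hx
      rw [Set.mem_mul] at hx
      obtain ⟨p, hp, q, hq, rfl⟩ := hx
      simp only [Set.mem_insert_iff, Set.mem_singleton_iff] at hp hq
      rcases hp with rfl | rfl <;> rcases hq with rfl | rfl
      · exact Ideal.subset_span (by left; rw [pow_two])
      · exact Ideal.subset_span (by right; left; rfl)
      · exact Ideal.subset_span (by right; left; rw [mul_comm])
      · exact Ideal.subset_span (by right; right; rw [Set.mem_singleton_iff, pow_two])
    exact stmt2_key (hle hmem)
end

section
/- A commutative ring $R$ satisfies: for all ideals $I \subsetneq J$, $I^n \subsetneq J^n$ for all $n \geq 1$, if and only if for every ideal $I$ of $R$ and every $f \notin I$ with $f^2 \in I^2$ and $fI \subseteq I^2$, one has $f \in I$. -/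
open Ideal

private lemma key_le {R : Type*} [CommRing R]
    (h : ∀ (I : Ideal R) (f : R), f ∉ I → f ^ 2 ∈ I ^ 2 →
      Ideal.span {f} * I ≤ I ^ 2 → f ∈ I)
    (A B : Ideal R) (hAB : A ≤ B) (hsq : B ^ 2 ≤ A ^ 2) : B ≤ A := by
  intro f hf
  by_cases hfA : f ∈ A
  · exact hfA
  · refine h A f hfA (hsq (pow_mem_pow hf 2)) ?_
    calc Ideal.span {f} * A ≤ B * B := by
          apply Ideal.mul_mono
          · rw [Ideal.span_le]; simpa using hf
          · exact hAB
      _ = B ^ 2 := (sq B).symm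
      _ ≤ A ^ 2 := hsq

private lemma key_eq {R : Type*} [CommRing R]
    (h : ∀ (I : Ideal R) (f : R), f ∉ I → f ^ 2 ∈ I ^ 2 →
      Ideal.span {f} * I ≤ I ^ 2 → f ∈ I) :
    ∀ n : ℕ, ∀ I J : Ideal R, I ≤ J → I ^ (n + 1) = J ^ (n + 1) → I = J := by
  intro n
  induction n with
  | zero => intro I J _ hIJ; simpa using hIJ
  | succ n ih =>
    intro I J hle hpow
    -- m = n+1, power index is m+1 = n+2
    have stepA : I ^ (n + 1) * J = I ^ (n + 2) := by
      apply le_antisymm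
      · calc I ^ (n + 1) * J ≤ J ^ (n + 1) * J :=
              Ideal.mul_mono (Ideal.pow_right_mono hle _) le_rfl
          _ = J ^ (n + 2) := by ring
          _ = I ^ (n + 2) := hpow.symm
      · calc I ^ (n + 2) = I ^ (n + 1) * I := by ring
          _ ≤ I ^ (n + 1) * J := Ideal.mul_mono le_rfl hle
    have stepB : ∀ k : ℕ, I ^ (n + 1) * J ^ k = I ^ (n + 1 + k) := by
      intro k
      induction k with
      | zero => simp
      | succ k ihk =>
        calc I ^ (n + 1) * J ^ (k + 1) = (I ^ (n + 1) * J) * J ^ k := by ring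
          _ = I ^ (n + 2) * J ^ k := by rw [stepA]
          _ = I * (I ^ (n + 1) * J ^ k) := by ring
          _ = I * I ^ (n + 1 + k) := by rw [ihk]
          _ = I ^ (n + 1 + (k + 1)) := by ring
    have stepC : (J ^ (n + 1)) ^ 2 ≤ (I ^ (n + 1)) ^ 2 := by
      have : (J ^ (n + 1)) ^ 2 = (I ^ (n + 1)) ^ 2 := by
        calc (J ^ (n + 1)) ^ 2 = J ^ (n + 2) * J ^ n := by ring
          _ = I ^ (n + 2) * J ^ n := by rw [hpow]
          _ = I * (I ^ (n + 1) * J ^ n) := by ring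
          _ = I * I ^ (n + 1 + n) := by rw [stepB]
          _ = (I ^ (n + 1)) ^ 2 := by ring
      exact this.le
    have hle' : J ^ (n + 1) ≤ I ^ (n + 1) :=
      key_le h _ _ (Ideal.pow_right_mono hle _) stepC
    exact ih I J hle (le_antisymm (Ideal.pow_right_mono hle _) hle')

theorem stmt_3 {R : Type*} [CommRing R] :
    (∀ I J : Ideal R, I < J → ∀ n : ℕ, 1 ≤ n → I ^ n < J ^ n) ↔
    (∀ (I : Ideal R) (f : R), f ∉ I → f ^ 2 ∈ I ^ 2 →
      Ideal.span {f} * I ≤ I ^ 2 → f ∈ I) := by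
  constructor
  · intro h I f hf h2 h3
    exfalso
    set J := I ⊔ Ideal.span {f} with hJ
    have hfJ : f ∈ J := Ideal.mem_sup_right (Ideal.subset_span (Set.mem_singleton f))
    have hlt : I < J := lt_of_le_of_ne le_sup_left (fun e => hf (e ▸ hfJ))
    have hstrict := h I J hlt 2 one_le_two
    have hle : J ^ 2 ≤ I ^ 2 := by
      have : J ^ 2 = J * J := sq J
      rw [this, hJ, Ideal.sup_mul, Ideal.mul_sup, Ideal.mul_sup]
      have h1 : I * I ≤ I ^ 2 := (sq I).ge
      have h2' : I * Ideal.span {f} ≤ I ^ 2 := by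
        rw [mul_comm]; exact h3
      have h3' : Ideal.span {f} * I ≤ I ^ 2 := h3
      have h4 : Ideal.span {f} * Ideal.span {f} ≤ I ^ 2 := by
        rw [Ideal.span_singleton_mul_span_singleton, ← sq]
        rw [Ideal.span_le]
        simpa using h2
      exact sup_le (sup_le h1 h2') (sup_le h3' h4)
    exact hstrict.not_ge hle
  · intro h I J hlt n hn
    refine lt_of_le_of_ne (Ideal.pow_right_mono hlt.le _) (fun e => hlt.ne ?_)
    obtain ⟨m, rfl⟩ := Nat.exists_eq_add_of_le hn
    exact key_eq h m I J hlt.le (by simpa [add_comm] using e)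
end

section
/- In the ring $R = \mathbb{Z}[X^3, X^4, X^5]$ (the subring of $\mathbb{Z}[X]$ generated by $X^3, X^4, X^5$), the ideals $I = (X^3, X^4, 2X^5)$ and $J = (X^3, X^4, X^5)$ satisfy $I \subsetneq J$ but $I^2 = J^2$. -/
open Polynomial

private lemma coeff12 (p : Polynomial ℤ)
    (hp : p ∈ Algebra.adjoin ℤ ({X ^ 3, X ^ 4, X ^ 5} : Set (Polynomial ℤ))) :
    p.coeff 1 = 0 ∧ p.coeff 2 = 0 := by
  induction hp using Algebra.adjoin_induction with
  | mem x hx =>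
    rcases hx with rfl | rfl | rfl <;> constructor <;> simp [coeff_X_pow]
  | algebraMap r =>
    rw [Polynomial.algebraMap_apply]
    constructor <;> · rw [coeff_C]; norm_num
  | add x y hx hy ihx ihy => exact ⟨by simp [ihx.1, ihy.1], by simp [ihx.2, ihy.2]⟩
  | mul x y hx hy ihx ihy =>
    constructor <;>
    simp [coeff_mul, Finset.Nat.sum_antidiagonal_eq_sum_range_succ_mk,
      Finset.sum_range_succ, ihx.1, ihx.2, ihy.1, ihy.2]

theorem stmt_4
    (R : Subalgebra ℤ (Polynomial ℤ))
    (hR : R = Algebra.adjoin ℤ ({X ^ 3, X ^ 4, X ^ 5} : Set (Polynomial ℤ)))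
    (x3 x4 x5 : R)
    (h3 : (x3 : Polynomial ℤ) = X ^ 3) (h4 : (x4 : Polynomial ℤ) = X ^ 4)
    (h5 : (x5 : Polynomial ℤ) = X ^ 5) :
    Ideal.span ({x3, x4, 2 * x5} : Set R) < Ideal.span ({x3, x4, x5} : Set R) ∧
    (Ideal.span ({x3, x4, 2 * x5} : Set R)) ^ 2 = (Ideal.span ({x3, x4, x5} : Set R)) ^ 2 := by
  subst hR
  have m3 : x3 ∈ Ideal.span ({x3, x4, 2 * x5} : Set _) := Ideal.subset_span (by simp)
  have m4 : x4 ∈ Ideal.span ({x3, x4, 2 * x5} : Set _) := Ideal.subset_span (by simp)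
  have hIJ : Ideal.span ({x3, x4, 2 * x5} : Set _) ≤
      Ideal.span ({x3, x4, x5} : Set _) := by
    refine Ideal.span_le.2 ?_
    rintro y hy
    simp only [Set.mem_insert_iff, Set.mem_singleton_iff] at hy
    rcases hy with rfl | rfl | rfl
    · exact Ideal.subset_span (by simp)
    · exact Ideal.subset_span (by simp)
    · exact Ideal.mul_mem_left _ 2 (Ideal.subset_span (by simp))
  have e35 : x3 * x5 = x4 * x4 := by
    apply Subtype.ext; push_cast; rw [h3, h4, h5]; ring
  have e45 : x4 * x5 = x3 * x3 * x3 := by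
    apply Subtype.ext; push_cast; rw [h3, h4, h5]; ring
  have e55 : x5 * x5 = x3 * x3 * x4 := by
    apply Subtype.ext; push_cast; rw [h3, h4, h5]; ring
  constructor
  · rw [lt_iff_le_not_ge]
    refine ⟨hIJ, fun hle => ?_⟩
    have hx5 : x5 ∈ Ideal.span ({x3, x4, 2 * x5} : Set _) :=
      hle (Ideal.subset_span (by simp))
    rw [Ideal.mem_span_insert] at hx5
    obtain ⟨a, z, hz, heq⟩ := hx5
    rw [Ideal.mem_span_insert] at hz
    obtain ⟨b, w, hw, rfl⟩ := hz
    rw [Ideal.mem_span_singleton] at hw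
    obtain ⟨c, rfl⟩ := hw
    rw [two_mul, add_mul] at heq
    have hp := congrArg Subtype.val heq
    push_cast at hp
    rw [h3, h4, h5] at hp
    have hp' : (X ^ 5 : ℤ[X]) =
        (↑a : ℤ[X]) * X ^ 3 + (↑b : ℤ[X]) * X ^ 4 +
          ((↑c : ℤ[X]) * X ^ 5 + (↑c : ℤ[X]) * X ^ 5) := by
      linear_combination hp
    have h1 := congrArg (fun p => p.coeff 5) hp'
    simp only [coeff_add, coeff_X_pow, coeff_mul_X_pow'] at h1
    norm_num at h1
    rw [(coeff12 (a : ℤ[X]) a.2).2, (coeff12 (b : ℤ[X]) b.2).1] at h1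
    omega
  · rw [pow_two, pow_two]
    refine le_antisymm (Ideal.mul_mono hIJ hIJ) ?_
    rw [Ideal.span_mul_span']
    refine Ideal.span_le.2 ?_
    rintro y ⟨p, hp, q, hq, rfl⟩
    dsimp only
    simp only [Set.mem_insert_iff, Set.mem_singleton_iff] at hp hq
    rcases hp with rfl | rfl | rfl <;> rcases hq with rfl | rfl | rfl
    · exact Ideal.mul_mem_mul m3 m3
    · exact Ideal.mul_mem_mul m3 m4
    · rw [e35]; exact Ideal.mul_mem_mul m4 m4
    · exact Ideal.mul_mem_mul m4 m3
    · exact Ideal.mul_mem_mul m4 m4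
    · rw [e45]; exact Ideal.mul_mem_right x3 _ (Ideal.mul_mem_mul m3 m3)
    · rw [mul_comm p q, e35]; exact Ideal.mul_mem_mul m4 m4
    · rw [mul_comm p q, e45]; exact Ideal.mul_mem_right x3 _ (Ideal.mul_mem_mul m3 m3)
    · rw [e55]; exact Ideal.mul_mem_right x4 _ (Ideal.mul_mem_mul m3 m3)
end

section
/- Let $R$ be an integral domain which is not a field. Then there exist ideals $I \subsetneq J$ in the polynomial ring $R[X]$ with $I^2 = J^2$. Specifically, for a nonzero nonunit $a \in R$, $I = (X^4, a^3 X, a X^3, a^4)$ and $J = I + (a^2 X^2)$ satisfy $I \subsetneq J$ and $I^2 = J^2$. -/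
open Polynomial

theorem stmt_10 {R : Type*} [CommRing R] [IsDomain R] (hnf : ¬ IsField R)
    (a : R) (ha : a ≠ 0) (hu : ¬ IsUnit a)
    (I J : Ideal (Polynomial R))
    (hI : I = Ideal.span {X ^ 4, C a ^ 3 * X, C a * X ^ 3, C a ^ 4})
    (hJ : J = I + Ideal.span {C a ^ 2 * X ^ 2}) :
    I < J ∧ I ^ 2 = J ^ 2 := by
  set m : R[X] := C a ^ 2 * X ^ 2 with hm
  set K : Ideal R[X] := Ideal.span {m} with hK
  -- generators of I
  have hX4 : (X : R[X]) ^ 4 ∈ I := hI ▸ Ideal.subset_span (by simp)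
  have hg2 : C a ^ 3 * X ∈ I := hI ▸ Ideal.subset_span (by simp)
  have hg3 : C a * X ^ 3 ∈ I := hI ▸ Ideal.subset_span (by simp)
  have hg4 : C a ^ 4 ∈ I := hI ▸ Ideal.subset_span (by simp)
  -- m * s ∈ I * I for s ∈ I
  have hmI : ∀ s ∈ I, m * s ∈ I * I := by
    intro s hs
    rw [hI] at hs
    refine Submodule.span_induction ?_ ?_ ?_ ?_ hs
    · intro g hg
      simp only [Set.mem_insert_iff, Set.mem_singleton_iff] at hg
      rcases hg with rfl | rfl | rfl | rfl
      · have : m * X ^ 4 = (C a * X ^ 3) * (C a * X ^ 3) := by ring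
        rw [this]; exact Ideal.mul_mem_mul hg3 hg3
      · have : m * (C a ^ 3 * X) = (C a ^ 4) * (C a * X ^ 3) := by ring
        rw [this]; exact Ideal.mul_mem_mul hg4 hg3
      · have : m * (C a * X ^ 3) = (X ^ 4) * (C a ^ 3 * X) := by ring
        rw [this]; exact Ideal.mul_mem_mul hX4 hg2
      · have : m * (C a ^ 4) = (C a ^ 3 * X) * (C a ^ 3 * X) := by ring
        rw [this]; exact Ideal.mul_mem_mul hg2 hg2
    · simp
    · intro x y _ _ hx hy
      rw [mul_add]; exact Ideal.add_mem _ hx hy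
    · intro c x _ hx
      have e : m * (c • x) = c • (m * x) := by simp only [smul_eq_mul]; ring
      rw [e]
      exact Submodule.smul_mem _ c hx
  have hmm : m * m ∈ I * I := by
    have : m * m = (X ^ 4) * (C a ^ 4) := by ring
    rw [this]; exact Ideal.mul_mem_mul hX4 hg4
  -- m ∉ I
  have hmnot : m ∉ I := by
    intro hmem
    rw [hI, Ideal.mem_span_insert] at hmem
    obtain ⟨f, p1, hp1, heq⟩ := hmem
    rw [Ideal.mem_span_insert] at hp1
    obtain ⟨g, p2, hp2, heq2⟩ := hp1
    rw [Ideal.mem_span_insert] at hp2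
    obtain ⟨h, p3, hp3, heq3⟩ := hp2
    rw [Ideal.mem_span_singleton'] at hp3
    obtain ⟨k, hk⟩ := hp3
    subst heq2 heq3
    rw [← hk] at heq
    have heq' : C a ^ 2 * X ^ 2 =
        f * X ^ 4 + (C (a^3) * (g * X) + (C a * (h * X ^ 3) + C (a^4) * k)) := by
      simp only [← map_pow] at heq
      linear_combination heq
    have hc := congrArg (fun p => Polynomial.coeff p 2) heq'
    simp only [coeff_add, coeff_C_mul, coeff_mul_X, coeff_mul_X_pow', coeff_X_pow] at hc
    have hc0 : ((C a : R[X]) ^ 2).coeff 0 = a ^ 2 := by simp [← map_pow]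
    rw [hc0] at hc
    norm_num at hc
    -- hc : a ^ 2 = a^3 * g.coeff 1 + (a * 0 + a^4 * k.coeff 2) or similar
    have key : a ^ 2 * 1 = a ^ 2 * (a * (g.coeff 1 + a * k.coeff 2)) := by
      rw [mul_one]; linear_combination hc
    have h1 : (1 : R) = a * (g.coeff 1 + a * k.coeff 2) :=
      mul_left_cancel₀ (pow_ne_zero 2 ha) key
    exact hu (IsUnit.of_mul_eq_one _ h1.symm)
  have hmJ : m ∈ J := by
    rw [hJ, Submodule.add_eq_sup]
    exact Ideal.mem_sup_right (Ideal.subset_span rfl)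
  constructor
  · refine lt_of_le_of_ne ?_ ?_
    · rw [hJ, Submodule.add_eq_sup]; exact le_sup_left
    · intro h
      exact hmnot (h ▸ hmJ)
  · have hle : I ≤ J := by rw [hJ, Submodule.add_eq_sup]; exact le_sup_left
    refine le_antisymm ?_ ?_
    · rw [pow_two, pow_two]; exact Ideal.mul_mono hle hle
    · rw [pow_two, pow_two, hJ, hK, Submodule.add_eq_sup, Ideal.sup_mul, Ideal.mul_sup,
        Ideal.mul_sup]
      refine sup_le (sup_le le_rfl ?_) (sup_le ?_ ?_)
      · -- I * K ≤ I * I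
        refine Ideal.mul_le.mpr fun r hr s hs => ?_
        rw [Ideal.mem_span_singleton] at hs
        obtain ⟨c, rfl⟩ := hs
        have : r * (m * c) = c * (m * r) := by ring
        rw [this]
        exact Ideal.mul_mem_left _ c (hmI r hr)
      · -- K * I ≤ I * I
        refine Ideal.mul_le.mpr fun r hr s hs => ?_
        rw [Ideal.mem_span_singleton] at hr
        obtain ⟨c, rfl⟩ := hr
        have : m * c * s = c * (m * s) := by ring
        rw [this]
        exact Ideal.mul_mem_left _ c (hmI s hs)
      · -- K * K ≤ I * I
        refine Ideal.mul_le.mpr fun r hr s hs => ?_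
        rw [Ideal.mem_span_singleton] at hr hs
        obtain ⟨c, rfl⟩ := hr
        obtain ⟨d, rfl⟩ := hs
        have : m * c * (m * d) = c * d * (m * m) := by ring
        rw [this]
        exact Ideal.mul_mem_left _ _ hmm
end

section
/- Let $S$ be a faithfully flat extension of a commutative ring $R$ and $J$ an ideal of $R$. If $JS$ is a big ideal of $S$, then $J$ is a big ideal of $R$. -/
/-- An ideal `J` is big if every strictly smaller ideal has strictly smaller powers. -/
def IsBigIdeal {R : Type*} [CommRing R] (J : Ideal R) : Prop :=
  ∀ I : Ideal R, I < J → ∀ n : ℕ, 1 ≤ n → I ^ n < J ^ n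

open TensorProduct in
/-- Over a faithfully flat algebra, contraction of extension recovers membership. -/
lemma mem_of_algebraMap_mem_map {R S : Type*} [CommRing R] [CommRing S] [Algebra R S]
    [Module.FaithfullyFlat R S] (I : Ideal R) (x : R)
    (hx : algebraMap R S x ∈ I.map (algebraMap R S)) : x ∈ I := by
  set a : Ideal R := I.colon (Ideal.span {x}) with ha
  -- the injective map R⧸a → R⧸I, r ↦ r*x
  let inc : (R ⧸ a) →ₗ[R] (R ⧸ I) :=
    Submodule.liftQ a ((LinearMap.lsmul R (R ⧸ I)).flip (Submodule.Quotient.mk x)) (by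
      intro r hr
      have h1 : r • x ∈ I := Submodule.mem_colon_span_singleton.mp hr
      simp only [LinearMap.mem_ker, LinearMap.flip_apply, LinearMap.lsmul_apply,
        ← Submodule.Quotient.mk_smul, Submodule.Quotient.mk_eq_zero]
      exact h1)
  have inj : Function.Injective inc := by
    rw [← LinearMap.ker_eq_bot, eq_bot_iff]
    intro r hr
    induction r using Quotient.inductionOn' with | h r =>
    simp only [LinearMap.mem_ker, Submodule.Quotient.mk''_eq_mk, Submodule.liftQ_apply,
      LinearMap.flip_apply, LinearMap.lsmul_apply, ← Submodule.Quotient.mk_smul,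
      Submodule.Quotient.mk_eq_zero, inc] at hr
    simp only [Submodule.mem_bot, Submodule.Quotient.mk''_eq_mk, Submodule.Quotient.mk_eq_zero]
    exact Submodule.mem_colon_span_singleton.mpr hr
  have injT : Function.Injective (LinearMap.rTensor S inc) :=
    Module.Flat.rTensor_preserves_injective_linearMap inc inj
  -- the element 1 ⊗ 1 maps to 0
  have h0 : (LinearMap.rTensor S inc)
      ((Submodule.Quotient.mk 1 : R ⧸ a) ⊗ₜ[R] (1 : S)) = 0 := by
    have hinc : inc (Submodule.Quotient.mk 1) = Ideal.Quotient.mk I x := by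
      rw [Submodule.liftQ_apply]
      simp [← Ideal.Quotient.mk_eq_mk]
    rw [LinearMap.rTensor_tmul, hinc]
    apply (quotTensorEquivQuotSMul S I).injective
    rw [map_zero, quotTensorEquivQuotSMul_mk_tmul]
    rw [Submodule.Quotient.mk_eq_zero, Ideal.smul_top_eq_map]
    simpa [Algebra.smul_def] using hx
  have hz : (Submodule.Quotient.mk 1 : R ⧸ a) ⊗ₜ[R] (1 : S) = 0 := injT (by simpa using h0)
  -- hence 1 ∈ aS
  have h1 : (1 : S) ∈ a • (⊤ : Submodule R S) := by
    have h2 : (quotTensorEquivQuotSMul S a) ((Ideal.Quotient.mk a 1) ⊗ₜ[R] (1 : S)) = 0 := by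
      rw [show (Ideal.Quotient.mk a 1 : R ⧸ a) = Submodule.Quotient.mk 1 from rfl, hz, map_zero]
    rw [quotTensorEquivQuotSMul_mk_tmul, one_smul, Submodule.Quotient.mk_eq_zero] at h2
    exact h2
  -- faithful flatness: a • ⊤ = ⊤ implies a = ⊤
  have hat : a • (⊤ : Submodule R S) = ⊤ := by
    rw [Ideal.smul_top_eq_map] at h1 ⊢
    have : a.map (algebraMap R S) = ⊤ := Ideal.eq_top_of_isUnit_mem _ h1 isUnit_one
    rw [this]; rfl
  have haT : a = ⊤ :=
    ((Module.FaithfullyFlat.iff_flat_and_ideal_smul_eq_top R S).mp inferInstance).2 a hat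
  have : (1 : R) ∈ a := haT ▸ Submodule.mem_top
  simpa using Submodule.mem_colon_span_singleton.mp this

theorem stmt_13 {R S : Type*} [CommRing R] [CommRing S] [Algebra R S]
    [Module.FaithfullyFlat R S] (J : Ideal R)
    (h : IsBigIdeal (J.map (algebraMap R S))) : IsBigIdeal J := by
  intro I hIJ n hn
  refine lt_of_le_of_ne (Ideal.pow_right_mono hIJ.le n) ?_
  intro heq
  have hlt : I.map (algebraMap R S) < J.map (algebraMap R S) := by
    refine lt_of_le_of_ne (Ideal.map_mono hIJ.le) (fun e => hIJ.ne ?_)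
    refine le_antisymm hIJ.le (fun x hxJ => ?_)
    refine mem_of_algebraMap_mem_map (S := S) I x ?_
    rw [e]
    exact Ideal.mem_map_of_mem _ hxJ
  have := h _ hlt n hn
  rw [← Ideal.map_pow, ← Ideal.map_pow, heq] at this
  exact this.ne rfl
end

section
/- Let $J$ be a big ideal in an integral domain $R$ and $A \subsetneq R$ an invertible ideal. Then $AJ$ is a big ideal. -/
theorem stmt_14 {R : Type*} [CommRing R] [IsDomain R] (J A : Ideal R)
    (hJ : IsBigIdeal J) (hA : A < ⊤)
    (hinv : IsUnit (A : FractionalIdeal (nonZeroDivisors R) (FractionRing R))) :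
    IsBigIdeal (A * J) := by
  classical
  intro I hI n hn
  obtain ⟨u, hu⟩ := hinv
  set K := FractionRing R
  have hle : (I : FractionalIdeal (nonZeroDivisors R) K) ≤ ↑u * ↑J := by
    rw [hu, ← FractionalIdeal.coeIdeal_mul]
    exact (FractionalIdeal.coeIdeal_le_coeIdeal K).mpr hI.le
  have h1 : (↑u⁻¹ : FractionalIdeal (nonZeroDivisors R) K) * ↑I ≤ ↑J := by
    calc (↑u⁻¹ : FractionalIdeal (nonZeroDivisors R) K) * ↑I
        ≤ ↑u⁻¹ * (↑u * ↑J) := by gcongr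
      _ = ↑J := by rw [← mul_assoc, ← Units.val_mul, inv_mul_cancel, Units.val_one, one_mul]
  have h2 : (↑u⁻¹ : FractionalIdeal (nonZeroDivisors R) K) * ↑I ≤ 1 :=
    h1.trans FractionalIdeal.coeIdeal_le_one
  obtain ⟨I', hI'⟩ := FractionalIdeal.le_one_iff_exists_coeIdeal.mp h2
  have hIcoe : (I : FractionalIdeal (nonZeroDivisors R) K) = ↑u * ↑I' := by
    rw [hI', ← mul_assoc, ← Units.val_mul, mul_inv_cancel, Units.val_one, one_mul]
  have hI'J : I' < J := by
    refine lt_of_le_of_ne ((FractionalIdeal.coeIdeal_le_coeIdeal K).mp (hI' ▸ h1)) ?_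
    rintro rfl
    apply hI.ne
    apply FractionalIdeal.coeIdeal_injective (K := K)
    show (↑I : FractionalIdeal (nonZeroDivisors R) K) = ↑(A * I')
    rw [FractionalIdeal.coeIdeal_mul, hIcoe, hu]
  have hpow := hJ I' hI'J n hn
  have hpowc : (↑(I' ^ n) : FractionalIdeal (nonZeroDivisors R) K) < ↑(J ^ n) :=
    lt_of_le_of_ne ((FractionalIdeal.coeIdeal_le_coeIdeal K).mpr hpow.le)
      (fun h => hpow.ne (FractionalIdeal.coeIdeal_injective h))
  have key : (↑(I ^ n) : FractionalIdeal (nonZeroDivisors R) K) < ↑((A * J) ^ n) := by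
    have e1 : (↑(I ^ n) : FractionalIdeal (nonZeroDivisors R) K)
        = ↑(u ^ n) * ↑(I' ^ n) := by
      rw [FractionalIdeal.coeIdeal_pow, hIcoe, mul_pow, ← Units.val_pow_eq_pow_val,
        FractionalIdeal.coeIdeal_pow]
    have e2 : (↑((A * J) ^ n) : FractionalIdeal (nonZeroDivisors R) K)
        = ↑(u ^ n) * ↑(J ^ n) := by
      rw [FractionalIdeal.coeIdeal_pow, FractionalIdeal.coeIdeal_mul, ← hu, mul_pow,
        ← Units.val_pow_eq_pow_val, FractionalIdeal.coeIdeal_pow]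
    rw [e1, e2]
    refine lt_of_le_of_ne (by gcongr) (fun h => hpowc.ne ?_)
    have := congrArg (fun x => (↑(u ^ n)⁻¹ : FractionalIdeal (nonZeroDivisors R) K) * x) h
    rwa [← mul_assoc, ← mul_assoc, ← Units.val_mul, inv_mul_cancel, Units.val_one, one_mul, one_mul] at this
  exact lt_of_le_of_ne ((FractionalIdeal.coeIdeal_le_coeIdeal K).mp key.le)
    (fun h => key.ne (congrArg _ h))
end

section
/- Let $I$ be an ideal in a commutative Noetherian ring $R$. If $I_M$ is a big ideal in the localization $R_M$ for every maximal ideal $M \supseteq I$, then $I$ is a big ideal in $R$. -/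
theorem stmt_16 {R : Type*} [CommRing R] [IsNoetherianRing R] (I : Ideal R)
    (h : ∀ (M : Ideal R) (hM : M.IsMaximal), I ≤ M →
      haveI : M.IsPrime := hM.isPrime
      IsBigIdeal (I.map (algebraMap R (Localization.AtPrime M)))) :
    IsBigIdeal I := by
  intro J hJ n hn
  refine lt_of_le_of_ne (pow_le_pow_left' hJ.le n) ?_
  intro heq
  -- J ≠ I, so find a maximal ideal where localizations differ
  have hne : ¬ ∀ (P : Ideal R) (_ : P.IsMaximal),
      Ideal.map (algebraMap R (Localization.AtPrime P)) J =
        Ideal.map (algebraMap R (Localization.AtPrime P)) I := by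
    intro hall
    exact hJ.ne (Ideal.eq_of_localization_maximal hall)
  push_neg at hne
  obtain ⟨M, hM, hMne⟩ := hne
  haveI := hM.isPrime
  set f := algebraMap R (Localization.AtPrime M)
  have hle : Ideal.map f J ≤ Ideal.map f I := Ideal.map_mono hJ.le
  have hlt : Ideal.map f J < Ideal.map f I := lt_of_le_of_ne hle hMne
  have hpow : (Ideal.map f J) ^ n = (Ideal.map f I) ^ n := by
    rw [← Ideal.map_pow, ← Ideal.map_pow, heq]
  -- Case: I ≤ M
  by_cases hIM : I ≤ M
  · exact (h M hM hIM _ hlt n hn).ne hpow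
  · -- I ⊄ M : I maps to ⊤
    obtain ⟨x, hxI, hxM⟩ := SetLike.not_le_iff_exists.mp hIM
    have hxu : IsUnit (f x) := IsLocalization.map_units _ (⟨x, hxM⟩ : M.primeCompl)
    have hItop : Ideal.map f I = ⊤ :=
      Ideal.eq_top_of_isUnit_mem _ (Ideal.mem_map_of_mem f hxI) hxu
    have hJtop : Ideal.map f J = ⊤ := by
      have htop : (Ideal.map f J) ^ n = ⊤ := by rw [hpow, hItop, Ideal.top_pow]
      exact top_le_iff.mp (htop ▸ Ideal.pow_le_self (by omega))
    exact hlt.ne (hJtop.trans hItop.symm)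
end

section
/- Let $R$ be an integral domain in which every ideal generated by at most three elements is a big ideal. If $x, y \in R$ are nonzero with $x \notin Ry$ and $x^2 \notin Ry$, then $x/y$ is not integral over $R$ (as an element of the fraction field). -/
section Aux

variable {R : Type*} [CommRing R]

/-- Monomials lie in the corresponding power of the span of the pair. -/
lemma monomial_mem_pow (x y : R) (i j : ℕ) :
    x ^ i * y ^ j ∈ (Ideal.span {x, y}) ^ (i + j) := by
  rw [pow_add]
  exact Ideal.mul_mem_mul
    (Ideal.pow_mem_pow (Ideal.subset_span (by simp)) i)
    (Ideal.pow_mem_pow (Ideal.subset_span (by simp)) j)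

/-- Powers of a 2-generated ideal are spanned by monomials. -/
lemma pow_span_pair_le (x y : R) (k : ℕ) :
    (Ideal.span {x, y}) ^ k ≤ Ideal.span {r : R | ∃ i ≤ k, r = x ^ i * y ^ (k - i)} := by
  induction k with
  | zero =>
    rw [pow_zero, Ideal.one_eq_top]
    intro r _
    have h1 : (1 : R) ∈ {r : R | ∃ i ≤ 0, r = x ^ i * y ^ (0 - i)} := ⟨0, le_refl 0, by simp⟩
    have := Ideal.subset_span h1
    simpa using Ideal.mul_mem_left _ r this
  | succ k ih =>
    rw [pow_succ]
    refine le_trans (Ideal.mul_mono ih le_rfl) ?_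
    rw [Ideal.span_mul_span']
    rw [Ideal.span_le]
    rintro r hr
    rw [Set.mem_mul] at hr
    obtain ⟨a, ha, b, hb, rfl⟩ := hr
    obtain ⟨i, hik, rfl⟩ := ha
    simp only [Set.mem_insert_iff, Set.mem_singleton_iff] at hb
    rcases hb with hb | hb
    · rw [hb]
      have h : x ^ i * y ^ (k - i) * x = x ^ (i + 1) * y ^ (k + 1 - (i + 1)) := by
        rw [Nat.succ_sub_succ, pow_succ]; ring
      rw [h]
      exact Ideal.subset_span ⟨i + 1, by omega, rfl⟩
    · rw [hb]
      have h : x ^ i * y ^ (k - i) * y = x ^ i * y ^ (k + 1 - i) := by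
        rw [show k + 1 - i = (k - i) + 1 by omega, pow_succ]; ring
      rw [h]
      exact Ideal.subset_span ⟨i, by omega, rfl⟩

/-- Key step: if `x ^ n ∈ (y) * S ^ (n-1)` then `S ^ (s+1) = (y) * S ^ s` for `n ≤ s + 1`. -/
lemma step_lemma {R : Type*} [CommRing R] (x y : R) (n : ℕ) (hn : 1 ≤ n)
    (hxn : x ^ n ∈ Ideal.span {y} * (Ideal.span {x, y}) ^ (n - 1))
    (s : ℕ) (hs : n ≤ s + 1) :
    (Ideal.span {x, y}) ^ (s + 1) = Ideal.span {y} * (Ideal.span {x, y}) ^ s := by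
  set S : Ideal R := Ideal.span {x, y} with hS
  apply le_antisymm
  · refine le_trans (pow_span_pair_le x y (s + 1)) ?_
    rw [Ideal.span_le]
    rintro r ⟨i, hi, rfl⟩
    by_cases hii : i ≤ s
    · have h : x ^ i * y ^ (s + 1 - i) = y * (x ^ i * y ^ (s - i)) := by
        rw [show s + 1 - i = (s - i) + 1 by omega, pow_succ]; ring
      rw [h]
      refine Ideal.mul_mem_mul (Ideal.mem_span_singleton_self y) ?_
      have := monomial_mem_pow x y i (s - i)
      rwa [show i + (s - i) = s by omega] at this
    · have hi1 : i = s + 1 := by omega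
      subst hi1
      have heq : x ^ (s + 1) * y ^ (s + 1 - (s + 1)) = x ^ (s + 1 - n) * x ^ n := by
        rw [Nat.sub_self, pow_zero, mul_one, ← pow_add]
        congr 1
        omega
      rw [heq]
      have hmem : x ^ (s + 1 - n) * x ^ n ∈
          Ideal.span {x ^ (s + 1 - n)} * (Ideal.span {y} * S ^ (n - 1)) :=
        Ideal.mul_mem_mul (Ideal.mem_span_singleton_self _) hxn
      have hle : Ideal.span {x ^ (s + 1 - n)} * (Ideal.span {y} * S ^ (n - 1))
          ≤ Ideal.span {y} * S ^ s := by
        have hcomm : Ideal.span {x ^ (s + 1 - n)} * (Ideal.span {y} * S ^ (n - 1))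
            = Ideal.span {y} * (Ideal.span {x ^ (s + 1 - n)} * S ^ (n - 1)) := by ring
        rw [hcomm]
        refine Ideal.mul_mono le_rfl ?_
        have h1 : Ideal.span {x ^ (s + 1 - n)} ≤ S ^ (s + 1 - n) := by
          rw [Ideal.span_le]
          rintro r hr
          simp only [Set.mem_singleton_iff] at hr
          subst hr
          exact Ideal.pow_mem_pow (Ideal.subset_span (by simp)) _
        calc Ideal.span {x ^ (s + 1 - n)} * S ^ (n - 1)
            ≤ S ^ (s + 1 - n) * S ^ (n - 1) := Ideal.mul_mono h1 le_rfl
          _ = S ^ s := by rw [← pow_add]; congr 1; omega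
      exact hle hmem
  · have h0 : Ideal.span {y} ≤ S := by
      rw [Ideal.span_le]
      rintro r hr
      simp only [Set.mem_singleton_iff] at hr
      subst hr
      exact Ideal.subset_span (by simp)
    have h1 := Ideal.mul_mono h0 (le_refl (S ^ s))
    rwa [← pow_succ'] at h1

end Aux

theorem stmt_17 {R : Type*} [CommRing R] [IsDomain R]
    (hbig : ∀ (s : Finset R), s.card ≤ 3 → IsBigIdeal (Ideal.span (s : Set R)))
    (x y : R) (hx : x ≠ 0) (hy : y ≠ 0)
    (h1 : x ∉ Ideal.span ({y} : Set R)) (h2 : x ^ 2 ∉ Ideal.span ({y} : Set R)) :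
    ¬ IsIntegral R (algebraMap R (FractionRing R) x / algebraMap R (FractionRing R) y) := by
  intro hint
  classical
  set K := FractionRing R
  set A := algebraMap R K with hA
  set X := A x with hX
  set Y := A y with hY
  set t : K := X / Y with ht
  have hAinj : Function.Injective A := IsFractionRing.injective R K
  have hY0 : Y ≠ 0 := by
    intro h
    exact hy (hAinj (by simpa using h))
  obtain ⟨p, pmonic, hp⟩ := hint
  set n := p.natDegree with hn'
  have hn : 1 ≤ n := by
    by_contra hcon
    have h0 : n = 0 := by omega
    have : p = 1 := pmonic.natDegree_eq_zero.mp h0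
    rw [this] at hp
    simp at hp
  set S : Ideal R := Ideal.span {x, y} with hS
  -- Step 1: the integral equation over R
  have hr0 : ∑ i ∈ Finset.range (n + 1), p.coeff i * (x ^ i * y ^ (n - i)) = 0 := by
    apply hAinj
    rw [map_zero, map_sum]
    have key : ∀ i ∈ Finset.range (n + 1),
        A (p.coeff i * (x ^ i * y ^ (n - i))) = (p.coeff i • t ^ i) * Y ^ n := by
      intro i hi
      rw [Finset.mem_range] at hi
      have hin : i ≤ n := by omega
      have hty : t ^ i * Y ^ n = X ^ i * Y ^ (n - i) := by
        have hni : n - i + i = n := by omega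
        rw [ht, div_pow, div_mul_eq_mul_div, div_eq_iff (pow_ne_zero i hY0),
          mul_assoc, ← pow_add, hni]
      calc A (p.coeff i * (x ^ i * y ^ (n - i)))
          = A (p.coeff i) * (X ^ i * Y ^ (n - i)) := by
            rw [map_mul, map_mul, map_pow, map_pow]
        _ = A (p.coeff i) * (t ^ i * Y ^ n) := by rw [hty]
        _ = (p.coeff i • t ^ i) * Y ^ n := by rw [Algebra.smul_def, mul_assoc]
    rw [Finset.sum_congr rfl key, ← Finset.sum_mul]
    rw [← Polynomial.aeval_eq_sum_range, Polynomial.aeval_def, hp, zero_mul]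
  -- Step 2: x ^ n lies in (y) * S ^ (n - 1)
  have hxn : x ^ n ∈ Ideal.span {y} * S ^ (n - 1) := by
    rw [Finset.sum_range_succ, pmonic.coeff_natDegree, Nat.sub_self, pow_zero, mul_one,
      one_mul, add_eq_zero_iff_eq_neg] at hr0
    have hx' : x ^ n = ∑ i ∈ Finset.range n, -(p.coeff i * (x ^ i * y ^ (n - i))) := by
      rw [Finset.sum_neg_distrib, hr0, neg_neg]
    rw [hx']
    refine Submodule.sum_mem _ ?_
    intro i hi
    rw [Finset.mem_range] at hi
    have heq : -(p.coeff i * (x ^ i * y ^ (n - i)))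
        = (-(p.coeff i)) * (y * (x ^ i * y ^ (n - 1 - i))) := by
      rw [show n - i = (n - 1 - i) + 1 by omega, pow_succ]
      ring
    rw [heq]
    refine Ideal.mul_mem_left _ _ ?_
    refine Ideal.mul_mem_mul (Ideal.mem_span_singleton_self y) ?_
    have := monomial_mem_pow x y i (n - 1 - i)
    rwa [show i + (n - 1 - i) = n - 1 by omega] at this
  -- Step 3: S ^ (n + k) = (y) ^ k * S ^ n
  have hpow : ∀ k : ℕ, S ^ (n + k) = (Ideal.span {y}) ^ k * S ^ n := by
    intro k
    induction k with
    | zero => rw [pow_zero, one_mul, add_zero]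
    | succ k ih =>
      have hstep := step_lemma x y n hn hxn (n + k) (by omega)
      rw [show n + (k + 1) = (n + k) + 1 by omega, hstep, ih, pow_succ]
      ring
  -- Step 4: assemble the contradiction
  set F : Finset R := {x ^ 2, x * y, y ^ 2} with hF
  have hcard : F.card ≤ 3 := by
    rw [hF]
    refine le_trans (Finset.card_insert_le _ _) ?_
    refine le_trans (Nat.succ_le_succ (Finset.card_insert_le _ _)) ?_
    simp
  have hJ : Ideal.span (F : Set R) = S ^ 2 := by
    apply le_antisymm
    · rw [Ideal.span_le]
      intro r hr
      simp only [hF, Finset.coe_insert, Finset.coe_singleton, Set.mem_insert_iff,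
        Set.mem_singleton_iff] at hr
      rcases hr with rfl | rfl | rfl
      · have := monomial_mem_pow x y 2 0
        simpa using this
      · have := monomial_mem_pow x y 1 1
        simpa using this
      · have := monomial_mem_pow x y 0 2
        simpa using this
    · refine le_trans (pow_span_pair_le x y 2) ?_
      rw [Ideal.span_le]
      rintro r ⟨i, hi, rfl⟩
      interval_cases i
      · refine Ideal.subset_span ?_
        simp [hF]
      · refine Ideal.subset_span ?_
        simp [hF]
      · refine Ideal.subset_span ?_
        simp [hF]
  set I : Ideal R := Ideal.span {y} * S with hI
  have hyS : Ideal.span {y} ≤ S := by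
    rw [Ideal.span_le]
    rintro r hr
    simp only [Set.mem_singleton_iff] at hr
    subst hr
    exact Ideal.subset_span (by simp)
  have hILT : I < Ideal.span (F : Set R) := by
    rw [hJ]
    constructor
    · refine le_trans (Ideal.mul_mono hyS le_rfl) ?_
      rw [pow_two]
    · intro hle
      have hx2 : x ^ 2 ∈ S ^ 2 := by
        have := monomial_mem_pow x y 2 0
        simpa using this
      have : x ^ 2 ∈ I := hle hx2
      exact h2 ((Ideal.mul_le_left (I := Ideal.span {y}) (J := S)) this)
  have hlt := hbig F hcard I hILT n hn
  have hIn : I ^ n = Ideal.span (F : Set R) ^ n := by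
    rw [hI, hJ, mul_pow, ← hpow n, ← pow_mul]
    congr 1
    omega
  rw [hIn] at hlt
  exact lt_irrefl _ hlt
end

section
/- Let $R$ be an integral domain in which every finitely generated ideal is a big ideal. Then $R$ has no regular sequence of length $\geq 2$: there do not exist $a, b \in R$ such that $a$ is a nonzerodivisor, $b$ is a nonzerodivisor on $R/(a)$, and $(a,b) \neq R$. -/
theorem stmt_18 {R : Type*} [CommRing R] [IsDomain R]
    (hbig : ∀ J : Ideal R, J.FG → IsBigIdeal J) :
    ¬ ∃ a b : R, a ∈ nonZeroDivisors R ∧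
      (∀ x : R, b * x ∈ Ideal.span ({a} : Set R) → x ∈ Ideal.span ({a} : Set R)) ∧
      Ideal.span ({a, b} : Set R) ≠ ⊤ := by
  rintro ⟨a, b, ha, hreg, hne⟩
  have ha0 : a ≠ 0 := nonZeroDivisors.ne_zero ha
  have hreg' : ∀ x : R, a ∣ b * x → a ∣ x := by
    intro x hx
    exact Ideal.mem_span_singleton.mp
      (hreg x (Ideal.mem_span_singleton.mpr hx))
  set I : Ideal R := Ideal.span {a^4, a^3*b, a*b^3, b^4} with hIdef
  set J : Ideal R := Ideal.span (insert (a^2*b^2) {a^4, a^3*b, a*b^3, b^4}) with hJdef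
  set P : Ideal R := Ideal.span {a^2*b^2} with hPdef
  have hJPI : J = P ⊔ I := Ideal.span_insert _ _
  have hIJ : I ≤ J := Ideal.span_mono (Set.subset_insert _ _)
  have g1 : a^4 ∈ I := Ideal.subset_span (by simp)
  have g2 : a^3*b ∈ I := Ideal.subset_span (by simp)
  have g3 : a*b^3 ∈ I := Ideal.subset_span (by simp)
  have g4 : b^4 ∈ I := Ideal.subset_span (by simp)
  have hPP : P * P ≤ I * I := by
    rw [hPdef, Ideal.span_singleton_mul_span_singleton, Ideal.span_le]
    intro x hx
    simp only [Set.mem_singleton_iff] at hx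
    subst hx
    rw [show a^2*b^2*(a^2*b^2) = (a^3*b)*(a*b^3) by ring]
    exact Ideal.mul_mem_mul g2 g3
  have hPI : P * I ≤ I * I := by
    rw [hPdef, hIdef, Ideal.span_mul_span', Ideal.span_le]
    intro x hx
    rw [Set.mem_mul] at hx
    obtain ⟨p, hp, t, ht, rfl⟩ := hx
    simp only [Set.mem_singleton_iff] at hp
    subst hp
    simp only [Set.mem_insert_iff, Set.mem_singleton_iff] at ht
    rcases ht with rfl | rfl | rfl | rfl
    · rw [show a^2*b^2*a^4 = (a^3*b)*(a^3*b) by ring]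
      exact Ideal.mul_mem_mul g2 g2
    · rw [show a^2*b^2*(a^3*b) = (a^4)*(a*b^3) by ring]
      exact Ideal.mul_mem_mul g1 g3
    · rw [show a^2*b^2*(a*b^3) = (a^3*b)*(b^4) by ring]
      exact Ideal.mul_mem_mul g2 g4
    · rw [show a^2*b^2*b^4 = (a*b^3)*(a*b^3) by ring]
      exact Ideal.mul_mem_mul g3 g3
  have hJ2 : J * J ≤ I * I := by
    rw [hJPI]
    rw [Ideal.mul_le]
    intro r hr s hs
    rw [Submodule.mem_sup] at hr hs
    obtain ⟨p, hp, i, hi, rfl⟩ := hr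
    obtain ⟨q, hq, j, hj, rfl⟩ := hs
    have h1 : p * q ∈ I * I := hPP (Ideal.mul_mem_mul hp hq)
    have h2 : p * j ∈ I * I := hPI (Ideal.mul_mem_mul hp hj)
    have h3 : q * i ∈ I * I := hPI (Ideal.mul_mem_mul hq hi)
    have h4 : i * j ∈ I * I := Ideal.mul_mem_mul hi hj
    have : (p + i) * (q + j) = p*q + p*j + q*i + i*j := by ring
    rw [this]
    exact add_mem (add_mem (add_mem h1 h2) h3) h4
  -- conclude I = J using bigness
  have hJfg : J.FG := Submodule.fg_span (Set.toFinite _)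
  have hIJeq : I = J := by
    by_contra hneq
    have hlt : I < J := lt_of_le_of_ne hIJ hneq
    have h2 := hbig J hJfg I hlt 2 (by norm_num)
    rw [pow_two, pow_two] at h2
    exact absurd hJ2 (not_le_of_gt h2)
  have hab : a^2*b^2 ∈ I := by
    rw [hIJeq]
    exact Ideal.subset_span (by simp)
  -- extract coefficients
  rw [hIdef] at hab
  rw [show ({a^4, a^3*b, a*b^3, b^4} : Set R) = insert (a^4) {a^3*b, a*b^3, b^4} from rfl,
    Ideal.mem_span_insert] at hab
  obtain ⟨α, z1, hz1, e1⟩ := hab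
  rw [Ideal.mem_span_insert] at hz1
  obtain ⟨β, z2, hz2, e2⟩ := hz1
  rw [Ideal.mem_span_insert] at hz2
  obtain ⟨γ, z3, hz3, e3⟩ := hz2
  rw [Ideal.mem_span_singleton] at hz3
  obtain ⟨δ, hz4⟩ := hz3
  have e : a^2*b^2 = α*a^4 + β*(a^3*b) + γ*(a*b^3) + δ*b^4 := by
    rw [e1, e2, e3, hz4]; ring
  clear e1 e2 e3 hz4 z1 z2 z3
  -- step 1 : a ∣ δ
  have d1 : a ∣ b*(b*(b*(b*δ))) :=
    ⟨a*b^2 - α*a^3 - β*a^2*b - γ*b^3, by linear_combination -e⟩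
  have d2 : a ∣ δ := hreg' _ (hreg' _ (hreg' _ (hreg' _ d1)))
  obtain ⟨δ', rfl⟩ := d2
  have e2 : a*b^2 = α*a^3 + β*a^2*b + γ*b^3 + δ'*b^4 := by
    apply mul_left_cancel₀ ha0
    linear_combination e
  have d3 : a ∣ b*(b*(b*(γ + δ'*b))) :=
    ⟨b^2 - α*a^2 - β*a*b, by linear_combination -e2⟩
  have d4 : a ∣ γ + δ'*b := hreg' _ (hreg' _ (hreg' _ d3))
  obtain ⟨e', he⟩ := d4
  have e3 : b^2 = α*a^2 + β*a*b + e'*b^3 := by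
    apply mul_left_cancel₀ ha0
    linear_combination e2 + b^3 * he
  have d5 : a ∣ b*(b*(1 - e'*b)) :=
    ⟨α*a + β*b, by linear_combination e3⟩
  have d6 : a ∣ 1 - e'*b := hreg' _ (hreg' _ d5)
  obtain ⟨f, hf⟩ := d6
  apply hne
  rw [Ideal.eq_top_iff_one]
  have h1 : (1:R) = f*a + e'*b := by linear_combination hf
  rw [h1]
  exact add_mem (Ideal.mul_mem_left _ _ (Ideal.subset_span (by simp)))
    (Ideal.mul_mem_left _ _ (Ideal.subset_span (by simp)))
end
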